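/- Let $X$ be a Banach lattice that is $p$-convex for some $p > 1$, and let $\{f_n\}$ be a norm bounded disjoint sequence in $X$. Then the sequence of suprema $g_n := \bigvee_{k=1}^n \left|\frac{1}{k}\sum_{j=1}^k f_j\right| = \sum_{k=1}^n \frac{|f_k|}{k}$ is norm Cauchy; consequently the Cesàro sequence of $\{f_n\}$ is order bounded in $X$. -/

import Mathlib

open Filter Topology

section Aux

variable {X : Type*} [NormedAddCommGroup X] [Lattice X] [IsOrderedAddMonoid X] [HasSolidNorm X] [NormedSpace ℝ X]

private lemma aux_smul_nonneg (c : ℝ) (hc : 0 ≤ c) {x : X} (hx : 0 ≤ x) : 0 ≤ c • x := by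
  -- dyadic step
  have hdy : ∀ j : ℕ, (0 : X) ≤ ((2 : ℝ)⁻¹ ^ j) • x := by
    intro j
    induction j with
    | zero => simpa using hx
    | succ j ih =>
      apply nsmul_two_semiclosed
      have : (2 : ℕ) • (((2 : ℝ)⁻¹ ^ (j + 1)) • x) = ((2 : ℝ)⁻¹ ^ j) • x := by
        rw [← Nat.cast_smul_eq_nsmul ℝ, smul_smul]
        norm_num [pow_succ]
        ring_nf
      rw [this]; exact ih
  have hmd : ∀ (m j : ℕ), (0 : X) ≤ ((m : ℝ) * (2 : ℝ)⁻¹ ^ j) • x := by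
    intro m j
    rw [mul_smul, Nat.cast_smul_eq_nsmul ℝ]
    exact nsmul_nonneg (hdy j) m
  -- the approximating sequence of scalars
  have htend : Tendsto (fun n : ℕ => ((⌊c * (2 : ℝ) ^ n⌋₊ : ℝ) / (2 : ℝ) ^ n)) atTop (𝓝 c) := by
    have h2 : Tendsto (fun n : ℕ => ((2 : ℝ) ^ n)) atTop atTop :=
      tendsto_pow_atTop_atTop_of_one_lt (by norm_num)
    exact (tendsto_nat_floor_mul_div_atTop hc).comp h2
  have htend' : Tendsto (fun n : ℕ => ((⌊c * (2 : ℝ) ^ n⌋₊ : ℝ) / (2 : ℝ) ^ n) • x) atTop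
      (𝓝 (c • x)) := htend.smul tendsto_const_nhds
  refine ge_of_tendsto htend' (Eventually.of_forall fun n => ?_)
  have : ((⌊c * (2 : ℝ) ^ n⌋₊ : ℝ) / (2 : ℝ) ^ n) = (⌊c * (2 : ℝ) ^ n⌋₊ : ℝ) * (2 : ℝ)⁻¹ ^ n := by
    rw [div_eq_mul_inv, inv_pow]
  rw [this]
  exact hmd _ n

private lemma aux_smul_mono (c : ℝ) (hc : 0 ≤ c) {x y : X} (h : x ≤ y) : c • x ≤ c • y := by
  have := aux_smul_nonneg c hc (sub_nonneg.2 h)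
  rwa [smul_sub, sub_nonneg] at this

private lemma aux_neg_le_abs (x : X) : -x ≤ |x| := le_sup_right

private lemma aux_abs_smul_le (c : ℝ) (hc : 0 ≤ c) (x : X) : |c • x| ≤ c • |x| := by
  rw [show |c • x| = (c • x) ⊔ (-(c • x)) from rfl]
  refine sup_le (aux_smul_mono c hc (le_abs_self x)) ?_
  rw [← smul_neg]
  exact aux_smul_mono c hc (aux_neg_le_abs x)

private lemma aux_abs_add (a b : X) : |a + b| ≤ |a| + |b| := by
  rw [show |a + b| = (a + b) ⊔ (-(a + b)) from rfl]
  refine sup_le (add_le_add (le_abs_self a) (le_abs_self b)) ?_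
  rw [neg_add_rev]
  exact (add_le_add (aux_neg_le_abs b) (aux_neg_le_abs a)).trans_eq (add_comm _ _)

private lemma aux_abs_sum_le {ι : Type*} (s : Finset ι) (f : ι → X) :
    |∑ i ∈ s, f i| ≤ ∑ i ∈ s, |f i| := by
  induction s using Finset.cons_induction with
  | empty => simp
  | cons a s ha ih =>
    rw [Finset.sum_cons, Finset.sum_cons]
    exact (aux_abs_add _ _).trans (add_le_add le_rfl ih)

private lemma aux_abs_smul (c : ℝ) (hc : 0 < c) (x : X) : |c • x| = c • |x| := by
  refine le_antisymm (aux_abs_smul_le c hc.le x) ?_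
  have h := aux_abs_smul_le c⁻¹ (inv_nonneg.2 hc.le) (c • x)
  rw [inv_smul_smul₀ hc.ne'] at h
  have := aux_smul_mono c hc.le h
  rwa [smul_inv_smul₀ hc.ne'] at this

end Aux

/-- Cesàro sequence of `f`: `m ↦ (1/(m+1)) ∑_{n=0}^{m} f n`. -/
noncomputable def cesaro {X : Type*} [AddCommGroup X] [Module ℝ X] (f : ℕ → X) (m : ℕ) : X :=
  ((m : ℝ) + 1)⁻¹ • ∑ n ∈ Finset.range (m + 1), f n

/-- Let `X` be a `p`-convex Banach lattice (`p > 1`); the `p`-convexity inequality is stated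
for disjoint families, where the Krivine element `(∑ |g i|^p)^{1/p}` coincides with
`∑ |g i|`. Then for any norm bounded disjoint sequence `{f n}`, the sequence of suprema
`g_n = ⋁_{k=1}^n |(1/k)(f 1 + ⋯ + f k)| = ∑_{k=1}^n |f k|/k` is norm Cauchy;
consequently the Cesàro sequence of `{f n}` is order bounded in `X`. -/
theorem stmt4 {X : Type*} [NormedAddCommGroup X] [Lattice X] [IsOrderedAddMonoid X] [HasSolidNorm X] [NormedSpace ℝ X] [CompleteSpace X]
    (p : ℝ) (hp : 1 < p) (M : ℝ) (hM : 0 < M)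
    (hpconv : ∀ (n : ℕ) (g : Fin n → X), (∀ i j, i ≠ j → |g i| ⊓ |g j| = 0) →
      ‖∑ i, |g i|‖ ≤ M * (∑ i, ‖g i‖ ^ p) ^ (1 / p))
    (f : ℕ → X) (hdisj : ∀ n m, n ≠ m → |f n| ⊓ |f m| = 0)
    (C : ℝ) (hbdd : ∀ n, ‖f n‖ ≤ C) :
    CauchySeq (fun n => ∑ k ∈ Finset.range (n + 1), ((k : ℝ) + 1)⁻¹ • |f k|) ∧
      ∃ b : X, ∀ m, |cesaro f m| ≤ b := by
  have hC : (0 : ℝ) ≤ C := (norm_nonneg _).trans (hbdd 0)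
  set h : ℕ → X := fun k => ((k : ℝ) + 1)⁻¹ • |f k| with hh
  have hkpos : ∀ k : ℕ, (0 : ℝ) < ((k : ℝ) + 1)⁻¹ := fun k => by positivity
  have hpos : ∀ k, 0 ≤ h k := fun k => aux_smul_nonneg _ (hkpos k).le (abs_nonneg _)
  have habs : ∀ k : ℕ, |((k : ℝ) + 1)⁻¹ • f k| = h k := fun k =>
    aux_abs_smul _ (hkpos k) _
  -- the summable real majorant
  set a : ℕ → ℝ := fun k => ((((k : ℝ) + 1)⁻¹) * C) ^ p with ha
  have hanonneg : ∀ k, 0 ≤ a k := fun k =>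
    Real.rpow_nonneg (mul_nonneg (hkpos k).le hC) _
  have hasumm : Summable a := by
    have h1 : Summable (fun k : ℕ => 1 / ((k : ℝ)) ^ p) :=
      Real.summable_one_div_nat_rpow.mpr hp
    have h2 : Summable (fun k : ℕ => 1 / (((k : ℕ) + 1 : ℝ)) ^ p) := by
      have := (summable_nat_add_iff 1).mpr h1
      simpa [Nat.cast_add] using this
    have h3 : Summable (fun k : ℕ => (1 / (((k : ℕ) + 1 : ℝ)) ^ p) * C ^ p) := h2.mul_right _
    refine h3.congr fun k => ?_
    show 1 / ((k : ℝ) + 1) ^ p * C ^ p = (((k : ℝ) + 1)⁻¹ * C) ^ p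
    rw [Real.mul_rpow (hkpos k).le hC, Real.inv_rpow (by positivity), one_div]
  -- key finite estimate
  have key : ∀ s : Finset ℕ, ‖∑ k ∈ s, h k‖ ≤ M * (∑ k ∈ s, a k) ^ (1 / p) := by
    intro s
    set σ : Fin s.card → ℕ := fun i => (s.equivFin.symm i : ℕ) with hσ
    have hσmem : ∀ i, σ i ∈ s := fun i => (s.equivFin.symm i).2
    have hσinj : Function.Injective σ := fun i j hij => by
      apply s.equivFin.symm.injective
      exact Subtype.ext hij
    set g : Fin s.card → X := fun i => ((σ i : ℝ) + 1)⁻¹ • f (σ i) with hg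
    have hgd : ∀ i j, i ≠ j → |g i| ⊓ |g j| = 0 := by
      intro i j hij
      have hne : σ i ≠ σ j := fun e => hij (hσinj e)
      refine le_antisymm ?_ (le_inf (abs_nonneg _) (abs_nonneg _))
      calc |g i| ⊓ |g j| ≤ |f (σ i)| ⊓ |f (σ j)| := by
            refine inf_le_inf ?_ ?_ <;>
            · rw [habs]
              calc h _ ≤ (1 : ℝ) • |f _| := by
                    refine sub_nonneg.1 ?_
                    rw [← sub_smul]
                    refine aux_smul_nonneg _ ?_ (abs_nonneg _)
                    rw [sub_nonneg]
                    exact inv_le_one_of_one_le₀ (le_add_of_nonneg_left (by positivity))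
                _ = |f _| := one_smul _ _
        _ = 0 := hdisj _ _ hne
    have hest := hpconv s.card g hgd
    have e1 : ∑ i, |g i| = ∑ k ∈ s, h k := by
      rw [show (∑ k ∈ s, h k) = ∑ x : {x // x ∈ s}, h x from (Finset.sum_coe_sort s h).symm,
        ← Equiv.sum_comp s.equivFin.symm (fun x : {x // x ∈ s} => h x)]
      exact Finset.sum_congr rfl fun i _ => habs (σ i)
    have e2 : ∑ i, ‖g i‖ ^ p ≤ ∑ k ∈ s, a k := by
      rw [show (∑ k ∈ s, a k) = ∑ x : {x // x ∈ s}, a x from (Finset.sum_coe_sort s a).symm,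
        ← Equiv.sum_comp s.equivFin.symm (fun x : {x // x ∈ s} => a x)]
      refine Finset.sum_le_sum fun i _ => ?_
      have : ‖g i‖ = ((σ i : ℝ) + 1)⁻¹ * ‖f (σ i)‖ := by
        rw [hg, norm_smul, Real.norm_eq_abs, abs_of_pos (hkpos (σ i))]
      rw [this]
      refine Real.rpow_le_rpow (by positivity) ?_ (by linarith)
      exact mul_le_mul_of_nonneg_left (hbdd (σ i)) (hkpos (σ i)).le
    rw [e1] at hest
    refine hest.trans ?_
    refine mul_le_mul_of_nonneg_left ?_ hM.le
    exact Real.rpow_le_rpow (Finset.sum_nonneg fun i _ => by positivity) e2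
      (by positivity)
  -- summability of h
  have hsumm : Summable h := by
    rw [summable_iff_vanishing]
    intro e he
    obtain ⟨ε, hε, hball⟩ := Metric.mem_nhds_iff.1 he
    have hδ : (0 : ℝ) < (ε / M) ^ p := Real.rpow_pos_of_pos (div_pos hε hM) _
    obtain ⟨s₀, hs₀⟩ := (summable_iff_vanishing.1 hasumm) (Metric.ball 0 ((ε / M) ^ p))
      (Metric.ball_mem_nhds 0 hδ)
    refine ⟨s₀, fun t ht => ?_⟩
    apply hball
    rw [Metric.mem_ball, dist_zero_right]
    have h1 : ∑ k ∈ t, a k < (ε / M) ^ p := by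
      have := hs₀ t ht
      rw [Metric.mem_ball, dist_zero_right, Real.norm_eq_abs] at this
      exact (le_abs_self _).trans_lt this
    have h2 : (∑ k ∈ t, a k) ^ (1 / p) < ε / M := by
      have := Real.rpow_lt_rpow (Finset.sum_nonneg fun k _ => hanonneg k) h1
        (by positivity : (0:ℝ) < 1 / p)
      rwa [one_div, Real.rpow_rpow_inv (by positivity) (by positivity : p ≠ 0), ← one_div] at this
    calc ‖∑ k ∈ t, h k‖ ≤ M * (∑ k ∈ t, a k) ^ (1 / p) := key t
      _ < M * (ε / M) := by exact mul_lt_mul_of_pos_left h2 hM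
      _ = ε := by field_simp
  constructor
  · have := hsumm.hasSum.tendsto_sum_nat
    have h2 : Tendsto (fun n => ∑ k ∈ Finset.range (n + 1), h k) atTop (𝓝 (∑' k, h k)) :=
      this.comp (tendsto_add_atTop_nat 1)
    exact h2.cauchySeq
  · refine ⟨∑' k, h k, fun m => ?_⟩
    have hm : (0 : ℝ) < ((m : ℝ) + 1)⁻¹ := by positivity
    rw [show cesaro f m = ((m : ℝ) + 1)⁻¹ • ∑ n ∈ Finset.range (m + 1), f n from rfl]
    calc |((m : ℝ) + 1)⁻¹ • ∑ n ∈ Finset.range (m + 1), f n| = ((m : ℝ) + 1)⁻¹ • |∑ n ∈ Finset.range (m + 1), f n| :=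
          aux_abs_smul _ hm _
      _ ≤ ((m : ℝ) + 1)⁻¹ • ∑ n ∈ Finset.range (m + 1), |f n| :=
          aux_smul_mono _ hm.le (aux_abs_sum_le _ _)
      _ = ∑ n ∈ Finset.range (m + 1), ((m : ℝ) + 1)⁻¹ • |f n| := Finset.smul_sum
      _ ≤ ∑ n ∈ Finset.range (m + 1), h n := by
          refine Finset.sum_le_sum fun n hn => ?_
          refine sub_nonneg.1 ?_
          rw [← sub_smul]
          refine aux_smul_nonneg _ ?_ (abs_nonneg _)
          rw [sub_nonneg]
          refine inv_anti₀ (by positivity) ?_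
          have h1 : (n : ℝ) ≤ m := Nat.cast_le.2 (Nat.lt_succ_iff.1 (Finset.mem_range.1 hn))
          linarith
      _ ≤ ∑' k, h k := Summable.sum_le_tsum _ (fun k _ => hpos k) hsumm
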